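/- For the classification of D-dimensional L2 balls with R = 1 and zero margin, the capacity satisfies α_B(0, 1, D) = 2/(D+1). Precisely: ∫_0^∞ χ_D(t) [∫_{-t}^{t} ((t^2+t_0^2)/2 - t·t_0) φ(t_0) dt_0 + ∫_{-∞}^{-t} (t_0^2 + t^2) φ(t_0) dt_0] dt = (D+1)/2, where φ is the standard Gaussian density and χ_D is the Chi density with D degrees of freedom. -/

import Mathlib

open MeasureTheory Real

/-- The standard Gaussian density. -/
noncomputable def stdGaussian (t : ℝ) : ℝ :=
  (Real.sqrt (2 * Real.pi))⁻¹ * Real.exp (-t ^ 2 / 2)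

/-- The Chi density with `D` degrees of freedom. -/
noncomputable def chiDensity (D : ℕ) (t : ℝ) : ℝ :=
  (2 : ℝ) ^ ((1 : ℝ) - (D : ℝ) / 2) / Real.Gamma ((D : ℝ) / 2) *
    t ^ (D - 1) * Real.exp (-t ^ 2 / 2)

open Set

lemma continuous_stdGaussian : Continuous stdGaussian := by
  unfold stdGaussian; fun_prop

lemma stdGaussian_neg (x : ℝ) : stdGaussian (-x) = stdGaussian x := by
  simp [stdGaussian, neg_sq]

lemma exp_form : ∀ x : ℝ, -(1/2 : ℝ) * x ^ 2 = -x ^ 2 / 2 := fun x => by ring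

lemma integrable_stdGaussian : Integrable stdGaussian := by
  have h := (integrable_exp_neg_mul_sq (b := 1/2) (by norm_num)).const_mul
    ((Real.sqrt (2 * Real.pi))⁻¹)
  have : stdGaussian = fun x : ℝ => (Real.sqrt (2 * Real.pi))⁻¹ * Real.exp (-(1/2) * x ^ 2) := by
    funext x; rw [stdGaussian, exp_form x]
  rw [this]; exact h

lemma integrable_sq_stdGaussian : Integrable (fun x : ℝ => x ^ 2 * stdGaussian x) := by
  have h := (integrable_rpow_mul_exp_neg_mul_sq (b := 1/2) (by norm_num)
    (s := 2) (by norm_num)).const_mul ((Real.sqrt (2 * Real.pi))⁻¹)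
  have e : ∀ x : ℝ, x ^ (2:ℝ) = x ^ (2:ℕ) := fun x => by
    rw [show ((2:ℝ)) = ((2:ℕ):ℝ) by norm_num, Real.rpow_natCast]
  simp only [exp_form, e] at h
  convert h using 2 with x
  simp [stdGaussian]; ring

lemma sqrt_two_pi_pos : 0 < Real.sqrt (2 * Real.pi) :=
  Real.sqrt_pos.2 (by positivity)

lemma integral_stdGaussian : ∫ x : ℝ, stdGaussian x = 1 := by
  have h := integral_gaussian (1/2)
  simp only [exp_form] at h
  rw [show π / (1/2) = 2 * π by ring] at h
  simp only [stdGaussian]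
  rw [integral_const_mul, h, inv_mul_cancel₀ sqrt_two_pi_pos.ne']

lemma rpow_two_eq (x : ℝ) : x ^ (2:ℝ) = x ^ (2:ℕ) := by
  rw [show ((2:ℝ)) = ((2:ℕ):ℝ) by norm_num, Real.rpow_natCast]

lemma gauss_moment_Ioi {q : ℝ} (hq : -1 < q) :
    ∫ x in Ioi (0:ℝ), x ^ q * Real.exp (-x ^ 2 / 2) =
      2 ^ ((q + 1) / 2 - 1) * Real.Gamma ((q + 1) / 2) := by
  have h := integral_rpow_mul_exp_neg_mul_rpow (p := 2) (q := q) (b := 1/2)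
    (by norm_num) hq (by norm_num)
  simp only [rpow_two_eq, exp_form] at h
  rw [h]
  have key : ((1:ℝ)/2) ^ (-(q + 1) / 2) * (1/2) = 2 ^ ((q + 1) / 2 - 1) := by
    rw [one_div, Real.inv_rpow (by norm_num : (0:ℝ) ≤ 2),
      ← Real.rpow_neg (by norm_num : (0:ℝ) ≤ 2),
      show (2:ℝ)⁻¹ = 2 ^ (-1:ℝ) by rw [Real.rpow_neg_one],
      ← Real.rpow_add (by norm_num : (0:ℝ) < 2)]
    congr 1; ring
  rw [← key]

lemma integral_sq_stdGaussian : ∫ x : ℝ, x ^ 2 * stdGaussian x = 1 := by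
  have hint := integrable_sq_stdGaussian
  have hsplit := intervalIntegral.integral_Iic_add_Ioi (b := (0:ℝ)) hint.integrableOn hint.integrableOn
  have hrefl : ∫ x in Iic (0:ℝ), x ^ 2 * stdGaussian x
      = ∫ x in Ioi (0:ℝ), x ^ 2 * stdGaussian x := by
    have h := integral_comp_neg_Ioi (0:ℝ) (fun x => x ^ 2 * stdGaussian x)
    simp only [neg_sq, stdGaussian_neg, neg_zero] at h
    exact h.symm
  have hI : ∫ x in Ioi (0:ℝ), x ^ 2 * stdGaussian x = 1/2 := by
    have e : ∀ x : ℝ, x ^ 2 * stdGaussian x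
        = (Real.sqrt (2 * π))⁻¹ * (x ^ (2:ℝ) * Real.exp (-x ^ 2 / 2)) := fun x => by
      rw [rpow_two_eq, stdGaussian]; ring
    simp_rw [e]
    rw [integral_const_mul, gauss_moment_Ioi (by norm_num : (-1:ℝ) < 2)]
    have hG : Real.Gamma (((2:ℝ) + 1) / 2) = Real.sqrt π / 2 := by
      rw [show ((2:ℝ) + 1) / 2 = 1/2 + 1 by norm_num,
        Real.Gamma_add_one (by norm_num), Real.Gamma_one_half_eq]; ring
    rw [hG, show ((2:ℝ) + 1) / 2 - 1 = 1/2 by norm_num, ← Real.sqrt_eq_rpow,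
      Real.sqrt_mul (by norm_num : (0:ℝ) ≤ 2) π]
    have h2 : Real.sqrt 2 ≠ 0 := by positivity
    have hπ : Real.sqrt π ≠ 0 := by positivity
    field_simp
  linarith [hsplit]

lemma integral_id_mul_stdGaussian (t : ℝ) :
    ∫ x in (-t)..t, x * stdGaussian x = 0 := by
  have key : ∀ x : ℝ, HasDerivAt (fun y => -stdGaussian y) (x * stdGaussian x) x := by
    intro x
    have h1 : HasDerivAt (fun y : ℝ => -y ^ 2 / 2) (-x) x := by
      have h0 := ((hasDerivAt_pow 2 x).div_const 2).fun_neg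
      have e : (fun y : ℝ => -(y ^ 2 / 2)) = fun y : ℝ => -y ^ 2 / 2 := by
        funext y; ring
      rw [e] at h0
      exact h0.congr_deriv (by simp)
    have h3 := ((h1.exp).const_mul ((Real.sqrt (2 * π))⁻¹)).fun_neg
    have e2 : (fun y : ℝ => -((Real.sqrt (2 * π))⁻¹ * Real.exp (-y ^ 2 / 2)))
        = fun y => -stdGaussian y := by funext y; rw [stdGaussian]
    rw [e2] at h3
    exact h3.congr_deriv (by simp only [stdGaussian]; ring)
  rw [intervalIntegral.integral_eq_sub_of_hasDerivAt (fun x _ => key x)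
    ((continuous_id'.mul continuous_stdGaussian).intervalIntegrable _ _)]
  simp [stdGaussian_neg]

lemma inner_eq {t : ℝ} (ht : 0 < t) :
    (∫ t0 in (-t)..t, ((t ^ 2 + t0 ^ 2) / 2 - t * t0) * stdGaussian t0) +
      (∫ t0 in Iic (-t), (t0 ^ 2 + t ^ 2) * stdGaussian t0) = (1 + t ^ 2) / 2 := by
  set g : ℝ → ℝ := fun x => (t ^ 2 + x ^ 2) * stdGaussian x with hg
  have hgc : Continuous g :=
    (continuous_const.add (continuous_pow 2)).mul continuous_stdGaussian
  have hgsum : g = fun x => t ^ 2 * stdGaussian x + x ^ 2 * stdGaussian x := by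
    funext x; simp only [hg]; ring
  have hgint : Integrable g := by
    rw [hgsum]; exact (integrable_stdGaussian.const_mul _).add integrable_sq_stdGaussian
  have hgeven : ∀ x, g (-x) = g x := fun x => by simp [hg, stdGaussian_neg]
  have hle : -t ≤ t := by linarith
  have h1 : (∫ t0 in (-t)..t, ((t ^ 2 + t0 ^ 2) / 2 - t * t0) * stdGaussian t0)
      = (1/2) * ∫ t0 in (-t)..t, g t0 := by
    have e : ∀ x : ℝ, ((t ^ 2 + x ^ 2) / 2 - t * x) * stdGaussian x
        = (1/2) * g x - t * (x * stdGaussian x) := fun x => by simp only [hg]; ring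
    simp_rw [e]
    rw [intervalIntegral.integral_sub
      ((continuous_const.fun_mul hgc).intervalIntegrable _ _)
      ((continuous_const.fun_mul (continuous_id'.fun_mul continuous_stdGaussian)).intervalIntegrable _ _),
      intervalIntegral.integral_const_mul, intervalIntegral.integral_const_mul,
      integral_id_mul_stdGaussian, mul_zero, sub_zero]
  have h2 : ∫ x in Iic (-t), g x = ∫ x in Ioi t, g x := by
    have h := integral_comp_neg_Ioi t g
    simp_rw [hgeven] at h; exact h.symm
  have e2 : ∀ x : ℝ, (x ^ 2 + t ^ 2) * stdGaussian x = g x := fun x => by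
    simp only [hg]; ring
  have hu : (∫ x in Ioc (-t) t, g x) + ∫ x in Ioi t, g x = ∫ x in Ioi (-t), g x := by
    rw [← MeasureTheory.setIntegral_union (Ioc_disjoint_Ioi le_rfl) measurableSet_Ioi
      hgint.integrableOn hgint.integrableOn, Ioc_union_Ioi_eq_Ioi hle]
  have hIic : (∫ x in Iic (-t), g x) + ∫ x in Ioi (-t), g x = ∫ x, g x :=
    intervalIntegral.integral_Iic_add_Ioi hgint.integrableOn hgint.integrableOn
  have htot : ∫ x, g x = t ^ 2 + 1 := by
    rw [hgsum, integral_add (integrable_stdGaussian.const_mul _) integrable_sq_stdGaussian,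
      integral_const_mul, integral_stdGaussian, integral_sq_stdGaussian, mul_one]
  rw [h1, intervalIntegral.integral_of_le hle]
  simp_rw [e2]
  linarith [h2, hu, hIic, htot]


lemma chiDensity_eq (D : ℕ) (hD : 1 ≤ D) : chiDensity D = fun t : ℝ =>
    (2:ℝ) ^ ((1:ℝ) - (D:ℝ)/2) / Real.Gamma ((D:ℝ)/2)
      * (t ^ ((D:ℝ) - 1) * Real.exp (-t ^ 2 / 2)) := by
  funext t
  have hcast : ((D - 1 : ℕ) : ℝ) = (D:ℝ) - 1 := by
    rw [Nat.cast_sub hD, Nat.cast_one]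
  rw [chiDensity, ← hcast, Real.rpow_natCast, mul_assoc]

lemma sq_chiDensity_eq (D : ℕ) (hD : 1 ≤ D) :
    (fun t : ℝ => t ^ 2 * chiDensity D t) = fun t : ℝ =>
    (2:ℝ) ^ ((1:ℝ) - (D:ℝ)/2) / Real.Gamma ((D:ℝ)/2)
      * (t ^ ((D:ℝ) + 1) * Real.exp (-t ^ 2 / 2)) := by
  funext t
  have hcast : ((D + 1 : ℕ) : ℝ) = (D:ℝ) + 1 := by push_cast; ring
  rw [← hcast, Real.rpow_natCast, chiDensity,
    show t ^ (D + 1 : ℕ) = t ^ (2:ℕ) * t ^ (D - 1 : ℕ) by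
      rw [← pow_add]; congr 1; omega]
  ring

lemma cast_D_pos (D : ℕ) (hD : 1 ≤ D) : (0:ℝ) < (D:ℝ) := by
  exact_mod_cast Nat.pos_of_ne_zero (by omega)

lemma Gamma_half_D_ne (D : ℕ) (hD : 1 ≤ D) : Real.Gamma ((D:ℝ)/2) ≠ 0 :=
  (Real.Gamma_pos_of_pos (by linarith [cast_D_pos D hD])).ne'

lemma hq1 (D : ℕ) (hD : 1 ≤ D) : (-1:ℝ) < (D:ℝ) - 1 := by
  linarith [cast_D_pos D hD]

lemma chi_integrableOn (D : ℕ) (hD : 1 ≤ D) :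
    IntegrableOn (chiDensity D) (Ioi (0:ℝ)) := by
  rw [chiDensity_eq D hD]
  have h := (integrableOn_rpow_mul_exp_neg_mul_sq (b := 1/2) (by norm_num)
    (s := (D:ℝ) - 1) (hq1 D hD)).const_mul
    ((2:ℝ) ^ ((1:ℝ) - (D:ℝ)/2) / Real.Gamma ((D:ℝ)/2))
  simp only [exp_form] at h; exact h

lemma sq_chi_integrableOn (D : ℕ) (hD : 1 ≤ D) :
    IntegrableOn (fun t : ℝ => t ^ 2 * chiDensity D t) (Ioi (0:ℝ)) := by
  rw [sq_chiDensity_eq D hD]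
  have h := (integrableOn_rpow_mul_exp_neg_mul_sq (b := 1/2) (by norm_num)
    (s := (D:ℝ) + 1) (by linarith [cast_D_pos D hD])).const_mul
    ((2:ℝ) ^ ((1:ℝ) - (D:ℝ)/2) / Real.Gamma ((D:ℝ)/2))
  simp only [exp_form] at h; exact h

lemma chi_int (D : ℕ) (hD : 1 ≤ D) : ∫ t in Ioi (0:ℝ), chiDensity D t = 1 := by
  rw [chiDensity_eq D hD, integral_const_mul, gauss_moment_Ioi (hq1 D hD),
    show ((D:ℝ) - 1 + 1)/2 = (D:ℝ)/2 by ring, div_mul_eq_mul_div,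
    div_eq_one_iff_eq (Gamma_half_D_ne D hD), ← mul_assoc,
    ← Real.rpow_add two_pos, show (1:ℝ) - (D:ℝ)/2 + ((D:ℝ)/2 - 1) = 0 by ring,
    Real.rpow_zero, one_mul]

lemma chi_sq_int (D : ℕ) (hD : 1 ≤ D) :
    ∫ t in Ioi (0:ℝ), t ^ 2 * chiDensity D t = (D:ℝ) := by
  rw [sq_chiDensity_eq D hD, integral_const_mul,
    gauss_moment_Ioi (by linarith [cast_D_pos D hD] : (-1:ℝ) < (D:ℝ) + 1),
    show ((D:ℝ) + 1 + 1)/2 = (D:ℝ)/2 + 1 by ring,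
    Real.Gamma_add_one (by linarith [cast_D_pos D hD] : (D:ℝ)/2 ≠ 0)]
  rw [div_mul_eq_mul_div, div_eq_iff (Gamma_half_D_ne D hD),
    show (2:ℝ) ^ ((1:ℝ) - (D:ℝ)/2) * ((2:ℝ) ^ ((D:ℝ)/2 + 1 - 1)
      * ((D:ℝ)/2 * Real.Gamma ((D:ℝ)/2)))
      = ((2:ℝ) ^ ((1:ℝ) - (D:ℝ)/2) * (2:ℝ) ^ ((D:ℝ)/2 + 1 - 1))
        * ((D:ℝ)/2 * Real.Gamma ((D:ℝ)/2)) by ring,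
    ← Real.rpow_add two_pos, show (1:ℝ) - (D:ℝ)/2 + ((D:ℝ)/2 + 1 - 1) = 1 by ring,
    Real.rpow_one]
  ring

/-- Capacity of `D`-dimensional `L₂` balls at `R = 1`, `κ = 0`:
`α_B(0,1,D)⁻¹ = (D+1)/2`. -/
theorem ball_capacity_R_one (D : ℕ) (hD : 1 ≤ D) :
    ∫ t in Set.Ioi (0 : ℝ), chiDensity D t *
      ((∫ t0 in (-t)..t, ((t ^ 2 + t0 ^ 2) / 2 - t * t0) * stdGaussian t0) +
        ∫ t0 in Set.Iic (-t), (t0 ^ 2 + t ^ 2) * stdGaussian t0) = ((D : ℝ) + 1) / 2 := by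
  rw [MeasureTheory.setIntegral_congr_fun measurableSet_Ioi
    (g := fun t : ℝ => (1/2) * chiDensity D t + (1/2) * (t ^ 2 * chiDensity D t))
    (fun t ht => by rw [inner_eq ht]; ring)]
  rw [MeasureTheory.integral_add ((chi_integrableOn D hD).const_mul _)
    ((sq_chi_integrableOn D hD).const_mul _),
    integral_const_mul, integral_const_mul, chi_int D hD, chi_sq_int D hD]
  ring
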